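/- If X, Y ⊆ ℚ and both X \ Y and Y \ X are finite, then X is a base if and only if Y is a base. -/

import Mathlib

namespace Stmt5Aux

/-- A representation of `q` by a nonempty list over `B` of length `c`. -/
def RepN (B : Set ℚ) (q : ℚ) (c : ℕ) : Prop :=
  ∃ l : List ℚ, (∀ x ∈ l, x ∈ B) ∧ l ≠ [] ∧ l.length = c ∧ l.sum = q

lemma RepN.add {B : Set ℚ} {q q' : ℚ} {c c' : ℕ} (h : RepN B q c) (h' : RepN B q' c') :
    RepN B (q + q') (c + c') := by
  obtain ⟨l, hl, hne, hlen, hsum⟩ := h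
  obtain ⟨l', hl', hne', hlen', hsum'⟩ := h'
  refine ⟨l ++ l', ?_, ?_, ?_, ?_⟩
  · intro x hx; rcases List.mem_append.mp hx with h | h; exacts [hl x h, hl' x h]
  · simp [hne]
  · simp [hlen, hlen']
  · simp [hsum, hsum']

lemma RepN.smul {B : Set ℚ} {q : ℚ} {c : ℕ} (h : RepN B q c) :
    ∀ t : ℕ, 1 ≤ t → RepN B ((t : ℚ) * q) (t * c) := by
  intro t ht
  induction t with
  | zero => omega
  | succ n ih =>
    rcases Nat.eq_or_lt_of_le ht with h1 | h1
    · have hn : n = 0 := by omega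
      subst hn; simpa using h
    · have := (ih (by omega)).add h
      have e1 : (n : ℚ) * q + q = ((n + 1 : ℕ) : ℚ) * q := by push_cast; ring
      have e2 : n * c + c = (n + 1) * c := by ring
      rwa [e1, e2] at this

lemma repN_pos {B : Set ℚ} {q : ℚ} {c : ℕ} (h : RepN B q c) : 1 ≤ c := by
  obtain ⟨l, _, hne, hlen, _⟩ := h
  have := List.length_pos_iff.mpr hne
  omega

/-- The subgroup of `ℤ` generated by differences of lengths of representations of `0`. -/
def DSet (B : Set ℚ) : AddSubgroup ℤ where
  carrier := {n | ∃ a b : ℕ, (a = 0 ∨ RepN B 0 a) ∧ (b = 0 ∨ RepN B 0 b) ∧ n = (a : ℤ) - b}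
  zero_mem' := ⟨0, 0, Or.inl rfl, Or.inl rfl, by ring⟩
  add_mem' := by
    rintro x y ⟨a, b, ha, hb, rfl⟩ ⟨a', b', ha', hb', rfl⟩
    refine ⟨a + a', b + b', ?_, ?_, by push_cast; ring⟩
    · rcases ha with rfl | ha
      · simpa using ha'
      · rcases ha' with rfl | ha'
        · simpa using Or.inr ha
        · exact Or.inr (by simpa using ha.add ha')
    · rcases hb with rfl | hb
      · simpa using hb'
      · rcases hb' with rfl | hb'
        · simpa using Or.inr hb
        · exact Or.inr (by simpa using hb.add hb')
  neg_mem' := by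
    rintro x ⟨a, b, ha, hb, rfl⟩
    exact ⟨b, a, hb, ha, by ring⟩

/-- Phase 2: bounded-length variable representations can be upgraded to a fixed length. -/
lemma phase2 (B : Set ℚ) (M : ℕ)
    (h : ∀ q : ℚ, ∃ c : ℕ, c ≤ M ∧ RepN B q c) :
    ∃ L : ℕ, 0 < L ∧ ∀ q : ℚ, RepN B q L := by
  obtain ⟨g0, hg0⟩ := Int.subgroup_cyclic (DSet B)
  have memD : ∀ n : ℤ, n ∈ DSet B ↔ g0 ∣ n := by
    intro n
    rw [hg0, AddSubgroup.mem_closure_singleton]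
    constructor
    · rintro ⟨k, rfl⟩; exact ⟨k, by simp [smul_eq_mul]; ring⟩
    · rintro ⟨k, rfl⟩; exact ⟨k, by simp [smul_eq_mul]; ring⟩
  -- any two representation lengths of the same q are congruent mod g0
  have congr : ∀ (q : ℚ) (a b : ℕ), RepN B q a → RepN B q b → g0 ∣ (a : ℤ) - b := by
    intro q a b hqa hqb
    obtain ⟨c, _, hc⟩ := h (-q)
    have h1 : RepN B 0 (a + c) := by simpa using hqa.add hc
    have h2 : RepN B 0 (b + c) := by simpa using hqb.add hc
    have d1 : ((a : ℤ) + c) ∈ DSet B := ⟨a + c, 0, Or.inr (by exact_mod_cast h1), Or.inl rfl, by push_cast; ring⟩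
    have d2 : ((b : ℤ) + c) ∈ DSet B := ⟨b + c, 0, Or.inr (by exact_mod_cast h2), Or.inl rfl, by push_cast; ring⟩
    have := (DSet B).sub_mem d1 d2
    rw [memD] at this
    have e : ((a : ℤ) + c) - ((b : ℤ) + c) = (a : ℤ) - b := by ring
    rwa [e] at this
  -- g0 divides 1
  have hB : ∃ b0 : ℚ, b0 ∈ B := by
    obtain ⟨c, _, l, hl, hne, _, _⟩ := h 0
    exact ⟨l.head hne, hl _ (List.head_mem hne)⟩
  obtain ⟨b0, hb0⟩ := hB
  have hg1 : g0 ∣ 1 := by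
    have hrep1 : RepN B b0 1 := ⟨[b0], by simpa using hb0, by simp, by simp, by simp⟩
    have e := g0.natAbs
    rcases eq_or_ne g0 0 with hz | hz
    · -- then DSet = ⊥, but it contains a positive element
      exfalso
      obtain ⟨c, _, hc⟩ := h 0
      have : ((c : ℤ) : ℤ) ∈ DSet B := ⟨c, 0, Or.inr hc, Or.inl rfl, by push_cast; ring⟩
      rw [memD, hz] at this
      have hc1 := repN_pos hc
      omega
    · set e := g0.natAbs with he
      have hepos : 1 ≤ e := by
        have := Int.natAbs_pos.mpr hz
        omega
      obtain ⟨c, _, hc⟩ := h (b0 / e)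
      have := hc.smul e hepos
      have heq : (e : ℚ) * (b0 / e) = b0 := by
        field_simp
      rw [heq] at this
      have hd := congr b0 (e * c) 1 this hrep1
      have hge : g0 ∣ (e : ℤ) := by
        rw [he]; exact Int.dvd_natAbs.mpr dvd_rfl
      -- g0 ∣ e*c - 1 and g0 ∣ e  ⇒  g0 ∣ 1
      have : g0 ∣ ((e : ℤ) * c - ((e : ℤ) * c - 1)) := by
        refine dvd_sub (Dvd.dvd.mul_right hge c) ?_
        have ee : ((e * c : ℕ) : ℤ) - (1 : ℕ) = (e : ℤ) * c - 1 := by push_cast; ring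
        rwa [ee] at hd
      simpa using this
  -- obtain b with RepN 0 b and RepN 0 (b+1)
  have hone : (1 : ℤ) ∈ DSet B := by rw [memD]; exact hg1
  obtain ⟨a, b, ha, hb, hab⟩ := hone
  have hab' : a = b + 1 := by omega
  have consec : ∃ b : ℕ, 1 ≤ b ∧ RepN B 0 b ∧ RepN B 0 (b + 1) := by
    rcases hb with rfl | hb
    · -- a = 1, so RepN 0 1 holds
      rcases ha with ha0 | ha
      · omega
      · rw [hab'] at ha
        simp only [Nat.zero_add] at ha
        exact ⟨1, le_refl 1, ha, by simpa using ha.add ha⟩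
    · rcases ha with ha0 | ha
      · omega
      · exact ⟨b, repN_pos hb, hb, hab' ▸ ha⟩
  obtain ⟨b, hb1, hzb, hzb1⟩ := consec
  -- zero representations of any length ≥ b*b
  have hz0 : ∀ t : ℕ, 1 ≤ t → RepN B 0 (t * b) := by
    intro t ht
    simpa using hzb.smul t ht
  have hz1 : ∀ t : ℕ, 1 ≤ t → RepN B 0 (t * (b + 1)) := by
    intro t ht
    simpa using hzb1.smul t ht
  have hzall : ∀ n : ℕ, b * b ≤ n → RepN B 0 n := by
    intro n hn
    set r := n % b with hr
    set k := n / b with hk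
    have hrb : r < b := Nat.mod_lt _ (by omega)
    have hkb : b ≤ k := by
      rw [hk]; exact (Nat.le_div_iff_mul_le (by omega)).mpr hn
    have hdm : b * k + r = n := by rw [hk, hr]; exact Nat.div_add_mod n b
    have hcomm : b * k = k * b := Nat.mul_comm b k
    have hnkr : n = k * b + r := by omega
    have hsub : (k - r) * b = k * b - r * b := Nat.sub_mul k r b
    have hmulle : r * b ≤ k * b := Nat.mul_le_mul_right b (by omega)
    have hsucc : r * (b + 1) = r * b + r := by ring
    have hsplit : n = (k - r) * b + r * (b + 1) := by omega
    rcases Nat.eq_zero_or_pos r with hr0 | hrpos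
    · have : n = k * b := by omega
      rw [this]; exact hz0 k (by omega)
    · have h1 : RepN B 0 ((k - r) * b) := hz0 (k - r) (by omega)
      have h2 : RepN B 0 (r * (b + 1)) := hz1 r hrpos
      have := h1.add h2
      rw [← hsplit] at this
      simpa using this
  have hbb : 1 ≤ b * b := Nat.one_le_iff_ne_zero.mpr (by positivity)
  refine ⟨M + b * b, by omega, ?_⟩
  intro q
  obtain ⟨c, hcM, hc⟩ := h q
  have hc1 := repN_pos hc
  have hz : RepN B 0 (M + b * b - c) := hzall _ (by omega)
  have := hc.add hz
  rw [add_zero] at this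
  have e : c + (M + b * b - c) = M + b * b := by omega
  rwa [e] at this


/-- Representation with an error term `n * g`. -/
def RepG (B : Set ℚ) (g : ℚ) (q : ℚ) (n : ℤ) : Prop :=
  ∃ l : List ℚ, (∀ x ∈ l, x ∈ B) ∧ q = l.sum + n * g

lemma RepG.add {B : Set ℚ} {g q q' : ℚ} {n n' : ℤ} (h : RepG B g q n) (h' : RepG B g q' n') :
    RepG B g (q + q') (n + n') := by
  obtain ⟨l, hl, hsum⟩ := h
  obtain ⟨l', hl', hsum'⟩ := h'
  refine ⟨l ++ l', ?_, ?_⟩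
  · intro x hx; rcases List.mem_append.mp hx with h | h; exacts [hl x h, hl' x h]
  · rw [List.sum_append, hsum, hsum']; push_cast; ring

lemma RepG.smul {B : Set ℚ} {g q : ℚ} {n : ℤ} (h : RepG B g q n) :
    ∀ t : ℕ, 1 ≤ t → RepG B g ((t : ℚ) * q) (t * n) := by
  intro t ht
  induction t with
  | zero => omega
  | succ k ih =>
    rcases Nat.eq_or_lt_of_le ht with h1 | h1
    · have hk : k = 0 := by omega
      subst hk; simpa using h
    · have := (ih (by omega)).add h
      have e1 : (k : ℚ) * q + q = ((k + 1 : ℕ) : ℚ) * q := by push_cast; ring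
      have e2 : (k : ℤ) * n + n = ((k + 1 : ℕ) : ℤ) * n := by push_cast; ring
      rwa [e1, e2] at this

def KSet (B : Set ℚ) (g : ℚ) : Set ℤ :=
  {k | ∃ l : List ℚ, l ≠ [] ∧ (∀ x ∈ l, x ∈ B) ∧ l.sum = (k : ℚ) * g}

lemma kset_add {B : Set ℚ} {g : ℚ} {a b : ℤ} (ha : a ∈ KSet B g) (hb : b ∈ KSet B g) :
    a + b ∈ KSet B g := by
  obtain ⟨l, hne, hl, hsum⟩ := ha
  obtain ⟨l', hne', hl', hsum'⟩ := hb
  refine ⟨l ++ l', by simp [hne], ?_, ?_⟩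
  · intro x hx; rcases List.mem_append.mp hx with h | h; exacts [hl x h, hl' x h]
  · rw [List.sum_append, hsum, hsum']; push_cast; ring

lemma kset_nsmul {B : Set ℚ} {g : ℚ} {a : ℤ} (ha : a ∈ KSet B g) :
    ∀ t : ℕ, 1 ≤ t → (t : ℤ) * a ∈ KSet B g := by
  intro t ht
  induction t with
  | zero => omega
  | succ k ih =>
    rcases Nat.eq_or_lt_of_le ht with h1 | h1
    · have hk : k = 0 := by omega
      subst hk; simpa using ha
    · have := kset_add (ih (by omega)) ha
      have e : (k : ℤ) * a + a = ((k + 1 : ℕ) : ℤ) * a := by push_cast; ring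
      rwa [e] at this

/-- Phase 1: from bounded representations with bounded error to bounded pure representations. -/
lemma phase1 (B : Set ℚ) (g : ℚ) (hg : g ≠ 0) (N C : ℕ)
    (HRep : ∀ q : ℚ, ∃ (l : List ℚ) (n : ℤ), (∀ x ∈ l, x ∈ B) ∧ l.length ≤ N ∧
      n.natAbs ≤ C ∧ q = l.sum + n * g) :
    ∃ M : ℕ, ∀ q : ℚ, ∃ c : ℕ, c ≤ M ∧ RepN B q c := by
  classical
  -- a positive element of KSet
  have kpos : ∃ k : ℤ, 0 < k ∧ k ∈ KSet B g := by
    obtain ⟨l, n, hl, _, hnC, heq⟩ := HRep (((C : ℚ) + 1) * g)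
    refine ⟨(C : ℤ) + 1 - n, ?_, l, ?_, hl, ?_⟩
    · have := Int.le_natAbs (a := n)
      omega
    · intro hnil
      rw [hnil] at heq
      simp only [List.sum_nil, zero_add] at heq
      have : ((C : ℚ) + 1 - (n : ℚ)) * g = 0 := by rw [sub_mul, heq]; ring
      rcases mul_eq_zero.mp this with h | h
      · have hn : (n : ℚ) = (C : ℚ) + 1 := by linarith [sub_eq_zero.mp h]
        have : n = (C : ℤ) + 1 := by exact_mod_cast hn
        have := Int.le_natAbs (a := n)
        omega
      · exact hg h
    · have : l.sum = ((C : ℚ) + 1) * g - n * g := by linarith [heq]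
      rw [this]; push_cast; ring
  have kneg : ∃ k : ℤ, k < 0 ∧ k ∈ KSet B g := by
    obtain ⟨l, n, hl, _, hnC, heq⟩ := HRep ((-(C : ℚ) - 1) * g)
    refine ⟨-(C : ℤ) - 1 - n, ?_, l, ?_, hl, ?_⟩
    · have := Int.le_natAbs (a := -n)
      rw [Int.natAbs_neg] at this
      omega
    · intro hnil
      rw [hnil] at heq
      simp only [List.sum_nil, zero_add] at heq
      have : (-(C : ℚ) - 1 - (n : ℚ)) * g = 0 := by rw [sub_mul, ← heq]; ring
      rcases mul_eq_zero.mp this with h | h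
      · have hn : (n : ℚ) = -(C : ℚ) - 1 := by linarith [sub_eq_zero.mp h]
        have : n = -(C : ℤ) - 1 := by exact_mod_cast hn
        have := Int.le_natAbs (a := -n)
        rw [Int.natAbs_neg] at this
        omega
      · exact hg h
    · have : l.sum = (-(C : ℚ) - 1) * g - n * g := by linarith [heq]
      rw [this]; push_cast; ring
  obtain ⟨kp, hkp, hkpK⟩ := kpos
  obtain ⟨kn, hkn, hknK⟩ := kneg
  set m : ℤ := kp * (-kn) with hm
  have hmpos : 0 < m := by
    rw [hm]; exact mul_pos hkp (by omega)
  have hmK : m ∈ KSet B g := by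
    have h := kset_nsmul hkpK (-kn).toNat (by omega)
    rw [Int.toNat_of_nonneg (by omega)] at h
    rw [hm, mul_comm]
    exact h
  have hmK' : -m ∈ KSet B g := by
    have h := kset_nsmul hknK kp.toNat (by omega)
    rw [Int.toNat_of_nonneg (by omega)] at h
    rw [hm, show -(kp * -kn) = kp * kn from by ring]
    exact h
  have shift : ∀ x ∈ KSet B g, ∀ j : ℤ, x + j * m ∈ KSet B g := by
    intro x hx j
    induction j using Int.induction_on with
    | zero => simpa using hx
    | succ i ih =>
      have := kset_add ih hmK
      rwa [show x + (i : ℤ) * m + m = x + ((i : ℤ) + 1) * m by ring] at this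
    | pred i ih =>
      have := kset_add ih hmK'
      rwa [show x + (-(i : ℤ)) * m + -m = x + (-(i : ℤ) - 1) * m by ring] at this
  have negclosed : ∀ x ∈ KSet B g, -x ∈ KSet B g := by
    intro x hx
    rcases eq_or_lt_of_le (show (1 : ℤ) ≤ m by omega) with h1 | h1
    · have := shift x hx (-2 * x)
      rwa [show x + -2 * x * m = -x by rw [← h1]; ring] at this
    · have hxm : (m - 1) * x ∈ KSet B g := by
        have := kset_nsmul hx (m - 1).toNat (by omega)
        rwa [Int.toNat_of_nonneg (by omega)] at this
      have := shift _ hxm (-x)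
      rwa [show (m - 1) * x + -x * m = -x by ring] at this
  have zeroK : (0 : ℤ) ∈ KSet B g := by
    have := kset_add hkpK (negclosed _ hkpK)
    simpa using this
  set KS : AddSubgroup ℤ :=
    { carrier := KSet B g
      zero_mem' := zeroK
      add_mem' := fun ha hb => kset_add ha hb
      neg_mem' := fun ha => negclosed _ ha } with hKS
  obtain ⟨g1, hg1⟩ := Int.subgroup_cyclic KS
  have memK : ∀ n : ℤ, n ∈ KSet B g ↔ g1 ∣ n := by
    intro n
    have : n ∈ KSet B g ↔ n ∈ KS := Iff.rfl
    rw [this, hg1, AddSubgroup.mem_closure_singleton]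
    constructor
    · rintro ⟨k, rfl⟩; exact ⟨k, by simp [smul_eq_mul]; ring⟩
    · rintro ⟨k, rfl⟩; exact ⟨k, by simp [smul_eq_mul]; ring⟩
  have hg1ne : g1 ≠ 0 := by
    intro h0
    have := (memK kp).mp hkpK
    rw [h0] at this
    simp only [zero_dvd_iff] at this
    omega
  -- any two error terms for the same q are congruent mod g1
  have rep0 : ∀ (t : ℤ) (l : List ℚ), (∀ x ∈ l, x ∈ B) → (0 : ℚ) = l.sum + t * g → g1 ∣ t := by
    intro t l hl hsum
    rcases List.eq_nil_or_concat l with rfl | _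
    · simp only [List.sum_nil, zero_add] at hsum
      have : (t : ℚ) = 0 := by
        rcases mul_eq_zero.mp hsum.symm with h | h
        · exact h
        · exact absurd h hg
      have ht : t = 0 := by exact_mod_cast this
      simp [ht]
    · rcases eq_or_ne l [] with rfl | hne
      · simp only [List.sum_nil, zero_add] at hsum
        have : (t : ℚ) = 0 := by
          rcases mul_eq_zero.mp hsum.symm with h | h
          · exact h
          · exact absurd h hg
        have ht : t = 0 := by exact_mod_cast this
        simp [ht]
      · have : -t ∈ KSet B g := by
          refine ⟨l, hne, hl, ?_⟩
          push_cast
          linarith [hsum]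
        have := (memK _).mp this
        exact (dvd_neg.mp this)
  have repdiff : ∀ (q : ℚ) (n₁ n₂ : ℤ), RepG B g q n₁ → RepG B g q n₂ → g1 ∣ n₁ - n₂ := by
    intro q n₁ n₂ h₁ h₂
    obtain ⟨l', n', hl', _, _, heq'⟩ := HRep (-q)
    have hrep' : RepG B g (-q) n' := ⟨l', hl', heq'⟩
    have z₁ := h₁.add hrep'
    have z₂ := h₂.add hrep'
    rw [add_neg_cancel] at z₁ z₂
    obtain ⟨la, hla, hsa⟩ := z₁
    obtain ⟨lb, hlb, hsb⟩ := z₂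
    have d₁ := rep0 _ _ hla hsa
    have d₂ := rep0 _ _ hlb hsb
    have := dvd_sub d₁ d₂
    rwa [show n₁ + n' - (n₂ + n') = n₁ - n₂ by ring] at this
  -- g1 divides 1
  have hg1one : g1 ∣ 1 := by
    set d : ℕ := g1.natAbs with hd
    have hdpos : 1 ≤ d := by
      have := Int.natAbs_pos.mpr hg1ne
      omega
    obtain ⟨l0, n0, hl0, _, _, heq0⟩ := HRep (g / (d : ℚ))
    have hrep0 : RepG B g (g / (d : ℚ)) n0 := ⟨l0, hl0, heq0⟩
    have hsc := hrep0.smul d hdpos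
    have hdne : (d : ℚ) ≠ 0 := by positivity
    rw [show (d : ℚ) * (g / (d : ℚ)) = g by field_simp] at hsc
    have hrepg : RepG B g g 1 := ⟨[], by simp, by simp⟩
    have hdvd := repdiff g _ _ hsc hrepg
    have hgd : g1 ∣ (d : ℤ) := by
      rw [hd]; exact Int.dvd_natAbs.mpr dvd_rfl
    have : g1 ∣ (d : ℤ) * n0 - ((d : ℤ) * n0 - 1) := dvd_sub (Dvd.dvd.mul_right hgd n0) hdvd
    simpa using this
  have Kall : ∀ n : ℤ, n ∈ KSet B g := by
    intro n
    exact (memK n).mpr (dvd_trans hg1one (one_dvd n))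
  -- choose lists for each n
  have hchoose : ∀ n : ℤ, ∃ l : List ℚ, l ≠ [] ∧ (∀ x ∈ l, x ∈ B) ∧ l.sum = (n : ℚ) * g :=
    fun n => Kall n
  choose s hs1 hs2 hs3 using hchoose
  refine ⟨N + (Finset.Icc (-(C : ℤ)) (C : ℤ)).sup (fun n => (s n).length), ?_⟩
  intro q
  obtain ⟨l, n, hl, hlen, hnC, heq⟩ := HRep q
  have hnIcc : n ∈ Finset.Icc (-(C : ℤ)) (C : ℤ) := by
    rw [Finset.mem_Icc]
    constructor
    · have := Int.le_natAbs (a := -n)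
      rw [Int.natAbs_neg] at this
      omega
    · have := Int.le_natAbs (a := n)
      omega
  refine ⟨l.length + (s n).length, ?_, l ++ s n, ?_, ?_, by simp, ?_⟩
  · have h2 : (s n).length ≤ (Finset.Icc (-(C : ℤ)) (C : ℤ)).sup (fun n => (s n).length) :=
      Finset.le_sup (f := fun k => (s k).length) hnIcc
    omega
  · intro x hx
    rcases List.mem_append.mp hx with h | h
    exacts [hl x h, hs2 n x h]
  · simp [hs1 n]
  · rw [List.sum_append, hs3 n, heq]

/-- The removal lemma: a base minus a finite set is a base (in list form). -/
lemma removal (X : Set ℚ) (F : Set ℚ) (hF : F.Finite) (N : ℕ) (hN : 0 < N)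
    (h : ∀ q : ℚ, ∃ f : Fin N → ℚ, (∀ i, f i ∈ X) ∧ q = ∑ i, f i) :
    ∃ L : ℕ, 0 < L ∧ ∀ q : ℚ, RepN (X \ F) q L := by
  classical
  set Fs := hF.toFinset with hFs
  set D : ℤ := ∏ f ∈ Fs, (f.den : ℤ) with hD
  have hDpos : 0 < D := Finset.prod_pos (fun f _ => by positivity)
  set g : ℚ := ((D : ℚ))⁻¹ with hgdef
  have hg : g ≠ 0 := by
    rw [hgdef]
    have : (D : ℚ) ≠ 0 := by exact_mod_cast hDpos.ne'
    exact inv_ne_zero this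
  have hc : ∀ f : ℚ, ∃ m : ℤ, f ∈ F → f = (m : ℚ) * g := by
    intro f
    by_cases hf : f ∈ F
    · have hdvd : ((f.den : ℤ)) ∣ D := Finset.dvd_prod_of_mem _ (hF.mem_toFinset.mpr hf)
      obtain ⟨t, ht⟩ := hdvd
      refine ⟨f.num * t, fun _ => ?_⟩
      have htne : t ≠ 0 := by
        intro h0; rw [h0, mul_zero] at ht; omega
      have hden : ((f.den : ℚ)) ≠ 0 := by positivity
      have htq : (t : ℚ) ≠ 0 := by exact_mod_cast htne
      have hDq : (D : ℚ) = (f.den : ℚ) * (t : ℚ) := by exact_mod_cast congrArg (fun z : ℤ => (z : ℚ)) ht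
      rw [hgdef, hDq]
      push_cast
      rw [mul_inv, show (f.num : ℚ) * t * ((f.den : ℚ)⁻¹ * (t:ℚ)⁻¹)
            = (f.num : ℚ) / f.den * (t * (t : ℚ)⁻¹) from by ring, mul_inv_cancel₀ htq, mul_one,
          Rat.num_div_den]
    · exact ⟨0, fun hff => absurd hff hf⟩
  choose cc hcc using hc
  set C0 : ℕ := Fs.sup (fun f => (cc f).natAbs) with hC0
  have split : ∀ l : List ℚ, (∀ x ∈ l, x ∈ X) →
      ∃ (lb : List ℚ) (n : ℤ), (∀ x ∈ lb, x ∈ X \ F) ∧ lb.length ≤ l.length ∧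
        n.natAbs ≤ l.length * C0 ∧ l.sum = lb.sum + n * g := by
    intro l hl
    induction l with
    | nil => exact ⟨[], 0, by simp, by simp, by simp, by simp⟩
    | cons x t ih =>
      obtain ⟨lb, n, h1, h2, h3, h4⟩ := ih (fun y hy => hl y (List.mem_cons_of_mem x hy))
      have e1 : (x :: t).length = t.length + 1 := by simp
      have e2 : (t.length + 1) * C0 = t.length * C0 + C0 := by ring
      by_cases hx : x ∈ F
      · refine ⟨lb, n + cc x, h1, ?_, ?_, ?_⟩
        · rw [e1]; omega
        · have hccx : (cc x).natAbs ≤ C0 :=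
            Finset.le_sup (f := fun f => (cc f).natAbs) (hF.mem_toFinset.mpr hx)
          have htri := Int.natAbs_add_le n (cc x)
          rw [e1]; omega
        · rw [List.sum_cons, h4]
          have hx' := hcc x hx
          push_cast
          linear_combination hx'
      · have hxB : x ∈ X \ F := ⟨hl x (List.mem_cons_self), hx⟩
        refine ⟨x :: lb, n, ?_, ?_, ?_, ?_⟩
        · intro y hy
          rcases List.mem_cons.mp hy with rfl | hy
          exacts [hxB, h1 y hy]
        · simpa using Nat.succ_le_succ h2
        · rw [e1]; omega
        · rw [List.sum_cons, List.sum_cons, h4]; ring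
  have HRep : ∀ q : ℚ, ∃ (l : List ℚ) (n : ℤ), (∀ x ∈ l, x ∈ X \ F) ∧ l.length ≤ N ∧
      n.natAbs ≤ N * C0 ∧ q = l.sum + n * g := by
    intro q
    obtain ⟨f, hfX, hfsum⟩ := h q
    have hlX : ∀ x ∈ List.ofFn f, x ∈ X := by
      intro x hx
      obtain ⟨i, rfl⟩ := List.mem_ofFn.mp hx
      exact hfX i
    obtain ⟨lb, n, h1, h2, h3, h4⟩ := split (List.ofFn f) hlX
    rw [List.length_ofFn] at h2 h3
    refine ⟨lb, n, h1, h2, h3, ?_⟩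
    rw [hfsum, ← List.sum_ofFn, h4]
  obtain ⟨M, hM⟩ := phase1 (X \ F) g hg N (N * C0) HRep
  exact phase2 (X \ F) M hM

/-- One direction of the main theorem. -/
lemma onedir (X Y : Set ℚ) (h1 : (X \ Y).Finite)
    (hX : ∃ N : ℕ, 0 < N ∧ ∀ q : ℚ, ∃ f : Fin N → ℚ, (∀ i, f i ∈ X) ∧ q = ∑ i, f i) :
    ∃ N : ℕ, 0 < N ∧ ∀ q : ℚ, ∃ f : Fin N → ℚ, (∀ i, f i ∈ Y) ∧ q = ∑ i, f i := by
  obtain ⟨N, hN, h⟩ := hX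
  obtain ⟨L, hL, hrep⟩ := removal X (X \ Y) h1 N hN h
  refine ⟨L, hL, ?_⟩
  intro q
  obtain ⟨l, hmem, hne, hlen, hsum⟩ := hrep q
  subst hlen
  refine ⟨l.get, ?_, ?_⟩
  · intro i
    have hx := hmem (l.get i) (by simpa using List.get_mem l i i.isLt)
    obtain ⟨hxX, hxnot⟩ := hx
    by_contra hY
    exact hxnot ⟨hxX, hY⟩
  · rw [← hsum, ← List.sum_ofFn, List.ofFn_get]

end Stmt5Aux

theorem stmt_5 (X Y : Set ℚ) (h1 : (X \ Y).Finite) (h2 : (Y \ X).Finite) :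
    (∃ N : ℕ, 0 < N ∧ ∀ q : ℚ,
      ∃ f : Fin N → ℚ, (∀ i, f i ∈ X) ∧ q = ∑ i, f i) ↔
    (∃ N : ℕ, 0 < N ∧ ∀ q : ℚ,
      ∃ f : Fin N → ℚ, (∀ i, f i ∈ Y) ∧ q = ∑ i, f i) := by
  constructor
  · exact Stmt5Aux.onedir X Y h1
  · exact Stmt5Aux.onedir Y X h2
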